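/- For every natural number m and every twice differentiable function f on I, the factorization (H_{m+1} f)(s) − λ_m f(s) = (A_m (A_m^+ f))(s) holds for all s in I. -/

import Mathlib

/-- For every `m : ℕ` and every twice differentiable function `f`
on the nonempty open interval `I` (on which `σ > 0`), the factorization
`H_{m+1} f - λ_m f = A_m (A_m^+ f)` holds on `I`, where
`A_m f = κ f' - m κ' f`, `A_m^+ f = -κ f' - (τ/κ) f - (m-1) κ' f`, and
`H_m f = -σ f'' - τ f' + [m(m-2)σ'²/(4σ) + mτσ'/(2σ) - m(m-2)σ''/2 - mτ'] f`. -/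
theorem factorization_Hm_succ_eq_Am_Am_plus
    (a b c d e : ℝ) (σ τ : ℝ → ℝ)
    (hσ : ∀ s, σ s = a * s ^ 2 + b * s + c)
    (hτ : ∀ s, τ s = d * s + e)
    (lam : ℕ → ℝ)
    (hlam : ∀ j : ℕ, lam j = -(j : ℝ) * ((j : ℝ) - 1) * a - (j : ℝ) * d)
    (I : Set ℝ) (hI : IsOpen I) (hIne : I.Nonempty) (hIconn : I.OrdConnected)
    (hσpos : ∀ s ∈ I, 0 < σ s)
    (κ : ℝ → ℝ) (hκ : ∀ s, κ s = Real.sqrt (σ s))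
    (m : ℕ) (f : ℝ → ℝ) (hf : ContDiffOn ℝ 2 f I)
    (Bf : ℝ → ℝ)
    (hBf : ∀ s, Bf s = -κ s * deriv f s - (τ s / κ s) * f s
        - ((m : ℝ) - 1) * deriv κ s * f s) :
    ∀ s ∈ I,
      (-σ s * deriv (deriv f) s - τ s * deriv f s
          + (((m : ℝ) + 1) * (((m : ℝ) + 1) - 2) * (2 * a * s + b) ^ 2 / (4 * σ s)
              + ((m : ℝ) + 1) * τ s * (2 * a * s + b) / (2 * σ s)
              - ((m : ℝ) + 1) * (((m : ℝ) + 1) - 2) * (2 * a) / 2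
              - ((m : ℝ) + 1) * d) * f s)
        - lam m * f s
      = κ s * deriv Bf s - (m : ℝ) * deriv κ s * Bf s := by
  intro s hs
  have hmem : I ∈ nhds s := hI.mem_nhds hs
  have hσs : 0 < σ s := hσpos s hs
  have hκpos : 0 < κ s := by rw [hκ s]; exact Real.sqrt_pos.mpr hσs
  have hκne : κ s ≠ 0 := ne_of_gt hκpos
  have hσκ : σ s = κ s ^ 2 := by rw [hκ s, Real.sq_sqrt hσs.le]
  -- derivative of σ
  have hσd : ∀ x : ℝ, HasDerivAt σ (2 * a * x + b) x := by
    intro x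
    have h := (((hasDerivAt_pow 2 x).const_mul a).add
      ((hasDerivAt_id' x).const_mul b)).add_const c
    have hfun : σ = fun x : ℝ => a * x ^ 2 + b * x + c := funext hσ
    rw [hfun]
    refine h.congr_deriv ?_
    push_cast
    ring
  -- derivative of κ on I
  have hκd : ∀ x ∈ I, HasDerivAt κ ((2 * a * x + b) / (2 * κ x)) x := by
    intro x hx
    have hx0 : σ x ≠ 0 := (hσpos x hx).ne'
    have h := (Real.hasDerivAt_sqrt hx0).comp x (hσd x)
    have h2 : HasDerivAt κ (1 / (2 * Real.sqrt (σ x)) * (2 * a * x + b)) x :=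
      h.congr_of_eventuallyEq (Filter.Eventually.of_forall hκ)
    have heq : 1 / (2 * Real.sqrt (σ x)) * (2 * a * x + b)
        = (2 * a * x + b) / (2 * κ x) := by rw [hκ x]; ring
    exact heq ▸ h2
  have hκ'eq : ∀ x ∈ I, deriv κ x = (2 * a * x + b) / (2 * κ x) :=
    fun x hx => (hκd x hx).deriv
  -- derivatives of f
  have hfd : ∀ x ∈ I, HasDerivAt f (deriv f x) x := fun x hx =>
    ((hf.differentiableOn (by norm_num)).differentiableAt (hI.mem_nhds hx)).hasDerivAt
  have hfd2 : HasDerivAt (deriv f) (deriv (deriv f) s) s := by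
    have h : ContDiffOn ℝ 1 (deriv f) I := hf.deriv_of_isOpen hI (by norm_num)
    exact ((h.differentiableOn (by norm_num)).differentiableAt hmem).hasDerivAt
  -- derivative of τ
  have hτd : HasDerivAt τ d s := by
    have h := ((hasDerivAt_id' s).const_mul d).add_const e
    have hfun : τ = fun x : ℝ => d * x + e := funext hτ
    rw [hfun]
    simpa using h
  -- second derivative of κ : deriv κ = (2ax+b)/(2κ x) near s
  have hnum : HasDerivAt (fun x : ℝ => 2 * a * x + b) (2 * a) s := by
    have h := ((hasDerivAt_id' s).const_mul (2 * a)).add_const b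
    simpa using h
  have hden : HasDerivAt (fun x : ℝ => 2 * κ x) (2 * ((2 * a * s + b) / (2 * κ s))) s :=
    (hκd s hs).const_mul 2
  have hgd : HasDerivAt (fun x : ℝ => (2 * a * x + b) / (2 * κ x))
      ((2 * a * (2 * κ s) - (2 * a * s + b) * (2 * ((2 * a * s + b) / (2 * κ s))))
        / (2 * κ s) ^ 2) s :=
    hnum.div hden (by positivity)
  have hκ'd : HasDerivAt (deriv κ)
      ((2 * a * (2 * κ s) - (2 * a * s + b) * (2 * ((2 * a * s + b) / (2 * κ s))))
        / (2 * κ s) ^ 2) s :=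
    hgd.congr_of_eventuallyEq (Filter.eventuallyEq_of_mem hmem hκ'eq)
  -- derivative of Bf
  have hB1 : HasDerivAt (fun x => -κ x * deriv f x)
      (-((2 * a * s + b) / (2 * κ s)) * deriv f s + -κ s * deriv (deriv f) s) s :=
    ((hκd s hs).neg).mul hfd2
  have hB2 : HasDerivAt (fun x => (τ x / κ x) * f x)
      ((d * κ s - τ s * ((2 * a * s + b) / (2 * κ s))) / κ s ^ 2 * f s
        + (τ s / κ s) * deriv f s) s :=
    (hτd.div (hκd s hs) hκne).mul (hfd s hs)
  have hB3 : HasDerivAt (fun x => ((m : ℝ) - 1) * deriv κ x * f x)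
      (((m : ℝ) - 1) * ((2 * a * (2 * κ s) - (2 * a * s + b) * (2 * ((2 * a * s + b) / (2 * κ s))))
        / (2 * κ s) ^ 2) * f s
        + ((m : ℝ) - 1) * deriv κ s * deriv f s) s :=
    (hκ'd.const_mul ((m : ℝ) - 1)).mul (hfd s hs)
  have hBd : HasDerivAt Bf
      ((-((2 * a * s + b) / (2 * κ s)) * deriv f s + -κ s * deriv (deriv f) s)
        - ((d * κ s - τ s * ((2 * a * s + b) / (2 * κ s))) / κ s ^ 2 * f s
            + (τ s / κ s) * deriv f s)
        - (((m : ℝ) - 1) * ((2 * a * (2 * κ s) - (2 * a * s + b) * (2 * ((2 * a * s + b) / (2 * κ s))))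
            / (2 * κ s) ^ 2) * f s
          + ((m : ℝ) - 1) * deriv κ s * deriv f s)) s :=
    ((hB1.sub hB2).sub hB3).congr_of_eventuallyEq (Filter.Eventually.of_forall hBf)
  rw [hBd.deriv, hBf s, hκ'eq s hs, hlam m, hτ s, hσκ]
  field_simp
  ring
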